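/- Let n ≥ 3, let q₁, …, q_n be points of the plane ℝ² in convex position, labeled in cyclic order around their convex hull, and let p be a point outside the convex hull of {q₁, …, q_n} such that the n+1 points q₁, …, q_n, p are in general position (no three collinear). Then the number of pairs (i, j) with 1 ≤ i, j ≤ n such that the straight line through p and q_j intersects the open segment joining q_i and q_{i+1} (indices taken mod n) equals exactly n - 2. -/

import Mathlib

noncomputable section

/-- The cyclic successor of an index in `Fin n`. -/
def nextFin {n : ℕ} (i : Fin n) : Fin n := ⟨((i : ℕ) + 1) % n, Nat.mod_lt _ i.pos⟩

def prevFin {n : ℕ} (i : Fin n) : Fin n := ⟨((i : ℕ) + (n - 1)) % n, Nat.mod_lt _ i.pos⟩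

def det2 (u v : ℝ × ℝ) : ℝ := u.1 * v.2 - u.2 * v.1

def ori (x y z : ℝ × ℝ) : ℝ := det2 (y - x) (z - x)

lemma plucker (S P Q R : ℝ × ℝ) :
    det2 S Q * det2 P R = det2 S P * det2 Q R + det2 S R * det2 P Q := by
  simp only [det2]; ring

lemma ori_cycle (a b c : ℝ × ℝ) : ori a b c = ori b c a := by
  simp only [ori, det2, Prod.fst_sub, Prod.snd_sub]; ring

lemma four_pt (a b c d : ℝ × ℝ) :
    ori b c d - ori a c d + ori a b d - ori a b c = 0 := by
  simp only [ori, det2, Prod.fst_sub, Prod.snd_sub]; ring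

lemma pos_mul_trans {a b c : ℝ} (h1 : 0 < a * b) (h2 : 0 < b * c) : 0 < a * c := by
  nlinarith [sq_nonneg b]

lemma det2_eq_zero_imp {u w : ℝ × ℝ} (hu : u ≠ 0) (h : det2 u w = 0) : ∃ r : ℝ, w = r • u := by
  have h' : u.1 * w.2 - u.2 * w.1 = 0 := h
  have hcase : u.1 ≠ 0 ∨ u.2 ≠ 0 := by
    by_contra hc
    push_neg at hc
    exact hu (Prod.ext hc.1 hc.2)
  rcases hcase with h1 | h2
  · refine ⟨w.1 / u.1, ?_⟩
    apply Prod.ext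
    · simp [div_mul_cancel₀]; field_simp
    · simp [smul_eq_mul]; field_simp; nlinarith [h']
  · refine ⟨w.2 / u.2, ?_⟩
    apply Prod.ext
    · simp [smul_eq_mul]; field_simp; nlinarith [h']
    · simp [smul_eq_mul]; field_simp

lemma collinear_iff_det {a b c : ℝ × ℝ} (hab : a ≠ b) :
    Collinear ℝ ({a, b, c} : Set (ℝ × ℝ)) ↔ det2 (b - a) (c - a) = 0 := by
  constructor
  · intro h
    obtain ⟨v, hv⟩ := (collinear_iff_of_mem (Set.mem_insert a _)).1 h
    obtain ⟨rb, hrb⟩ := hv b (by simp)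
    obtain ⟨rc, hrc⟩ := hv c (by simp)
    have hb : b - a = rb • v := by rw [hrb]; simp [vadd_eq_add]
    have hc : c - a = rc • v := by rw [hrc]; simp [vadd_eq_add]
    rw [hb, hc]
    simp [det2, smul_eq_mul]; ring
  · intro h
    have hba : b - a ≠ 0 := sub_ne_zero.2 (Ne.symm hab)
    obtain ⟨r, hr⟩ := det2_eq_zero_imp hba h
    apply (collinear_iff_of_mem (Set.mem_insert a _)).2
    refine ⟨b - a, ?_⟩
    intro x hx
    rcases hx with rfl | rfl | rfl
    · exact ⟨0, by simp⟩
    · exact ⟨1, by simp⟩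
    · exact ⟨r, by rw [← hr]; simp⟩

lemma exists_convex_zero_iff {d1 d2 : ℝ} (hnot : ¬(d1 = 0 ∧ d2 = 0)) :
    (∃ a b : ℝ, 0 < a ∧ 0 < b ∧ a + b = 1 ∧ a * d1 + b * d2 = 0) ↔ d1 * d2 < 0 := by
  constructor
  · rintro ⟨a, b, ha, hb, hab, hz⟩
    have hd1 : d1 ≠ 0 := by
      intro h0
      apply hnot
      refine ⟨h0, ?_⟩
      rw [h0, mul_zero, zero_add] at hz
      rcases mul_eq_zero.1 hz with h | h
      · exact absurd h hb.ne'
      · exact h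
    have hd2 : d2 ≠ 0 := by
      intro h0
      apply hnot
      refine ⟨?_, h0⟩
      rw [h0, mul_zero, add_zero] at hz
      rcases mul_eq_zero.1 hz with h | h
      · exact absurd h ha.ne'
      · exact h
    rcases lt_trichotomy d1 0 with h | h | h
    · have h2 : 0 < d2 := by nlinarith
      exact mul_neg_of_neg_of_pos h h2
    · exact absurd h hd1
    · have h2 : d2 < 0 := by nlinarith
      exact mul_neg_of_pos_of_neg h h2
  · intro h
    rcases mul_neg_iff.1 h with ⟨h1, h2⟩ | ⟨h1, h2⟩
    · refine ⟨-d2 / (d1 - d2), d1 / (d1 - d2), ?_, ?_, ?_, ?_⟩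
      · apply div_pos (by linarith) (by linarith)
      · apply div_pos (by linarith) (by linarith)
      · rw [← add_div, div_eq_one_iff_eq (by linarith : d1 - d2 ≠ 0)]
        ring
      · field_simp
        ring
    · refine ⟨d2 / (d2 - d1), -d1 / (d2 - d1), ?_, ?_, ?_, ?_⟩
      · apply div_pos (by linarith) (by linarith)
      · apply div_pos (by linarith) (by linarith)
      · rw [← add_div, div_eq_one_iff_eq (by linarith : d2 - d1 ≠ 0)]
        ring
      · field_simp
        ring

lemma cross_point_identity (A B C D : ℝ × ℝ) :
    ((ori A C D + ori A B C) - ori A B D) • A + (ori A B D) • C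
    = ((ori A C D + ori A B C) - ori A B C) • B + (ori A B C) • D := by
  apply Prod.ext <;>
  · simp only [ori, det2, Prod.fst_add, Prod.snd_add, Prod.smul_fst, Prod.smul_snd,
      smul_eq_mul, Prod.fst_sub, Prod.snd_sub]
    ring

lemma linear_repr (l : (ℝ × ℝ) →ₗ[ℝ] ℝ) (w : ℝ × ℝ) :
    l w = l (1, 0) * w.1 + l (0, 1) * w.2 := by
  have hw : w = w.1 • ((1:ℝ), (0:ℝ)) + w.2 • ((0:ℝ), (1:ℝ)) := by
    apply Prod.ext <;> simp
  conv_lhs => rw [hw]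
  rw [map_add, map_smul, map_smul, smul_eq_mul, smul_eq_mul]
  ring

lemma affine_factor (φ : (ℝ × ℝ) →ᵃ[ℝ] ℝ) {x y : ℝ × ℝ} (hxy : x ≠ y)
    (h1 : φ x = 0) (h2 : φ y = 0) : ∃ k : ℝ, ∀ z, φ z = k * ori x y z := by
  have hlin : ∀ z, φ z = φ.linear (z - x) := by
    intro z
    have h := AffineMap.linearMap_vsub φ z x
    rw [vsub_eq_sub, vsub_eq_sub, h1, sub_zero] at h
    exact h.symm
  have hu : φ.linear (1,0) * (y - x).1 + φ.linear (0,1) * (y - x).2 = 0 := by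
    rw [← linear_repr, ← hlin y, h2]
  have hune : (y - x).1 ≠ 0 ∨ (y - x).2 ≠ 0 := by
    by_contra hcon
    push_neg at hcon
    apply hxy
    have : y - x = 0 := Prod.ext hcon.1 hcon.2
    have := sub_eq_zero.1 this
    exact this.symm
  simp only [Prod.fst_sub, Prod.snd_sub] at hune
  rcases hune with ha | hb
  · refine ⟨φ.linear (0,1) / (y - x).1, fun z => ?_⟩
    rw [hlin z, linear_repr]
    simp only [ori, det2, Prod.fst_sub, Prod.snd_sub] at hu ⊢
    rw [div_mul_eq_mul_div, eq_div_iff ha]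
    linear_combination (z.1 - x.1) * hu
  · refine ⟨-(φ.linear (1,0)) / (y - x).2, fun z => ?_⟩
    rw [hlin z, linear_repr]
    simp only [ori, det2, Prod.fst_sub, Prod.snd_sub] at hu ⊢
    rw [div_mul_eq_mul_div, eq_div_iff hb]
    linear_combination (z.2 - x.2) * hu

section
variable {n : ℕ}

lemma nextFin_val_of_lt {i : Fin n} (h : (i : ℕ) + 1 < n) : (nextFin i).val = i.val + 1 := by
  simp [nextFin, Nat.mod_eq_of_lt h]

lemma nextFin_val_of_eq {i : Fin n} (h : (i : ℕ) + 1 = n) : (nextFin i).val = 0 := by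
  simp [nextFin, h, Nat.mod_self]

lemma nextFin_ne (hn : 2 ≤ n) (i : Fin n) : nextFin i ≠ i := by
  intro h
  have := congrArg Fin.val h
  by_cases hc : (i : ℕ) + 1 < n
  · rw [nextFin_val_of_lt hc] at this; omega
  · have he : (i : ℕ) + 1 = n := by have := i.isLt; omega
    rw [nextFin_val_of_eq he] at this; omega

lemma nextFin_prevFin (i : Fin n) : nextFin (prevFin i) = i := by
  have h0 : 0 < n := i.pos
  apply Fin.ext
  show ((i.val + (n - 1)) % n + 1) % n = i.val
  rw [Nat.mod_add_mod]
  have : i.val + (n - 1) + 1 = i.val + n := by omega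
  rw [this, Nat.add_mod_right]
  exact Nat.mod_eq_of_lt i.isLt

lemma prevFin_nextFin (i : Fin n) : prevFin (nextFin i) = i := by
  have h0 : 0 < n := i.pos
  apply Fin.ext
  show ((i.val + 1) % n + (n - 1)) % n = i.val
  rw [Nat.mod_add_mod]
  have : i.val + 1 + (n - 1) = i.val + n := by omega
  rw [this, Nat.add_mod_right]
  exact Nat.mod_eq_of_lt i.isLt

lemma nextFin_bijective : Function.Bijective (nextFin : Fin n → Fin n) :=
  Function.bijective_iff_has_inverse.2 ⟨prevFin, prevFin_nextFin, nextFin_prevFin⟩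

lemma nextFin_nextFin_val (i : Fin n) : (nextFin (nextFin i)).val = (i.val + 2) % n := by
  show ((i.val + 1) % n + 1) % n = (i.val + 2) % n
  rw [Nat.mod_add_mod]

lemma nextFin_nextFin_ne (hn : 3 ≤ n) (i : Fin n) : nextFin (nextFin i) ≠ i := by
  intro h
  have h1 := congrArg Fin.val h
  rw [nextFin_nextFin_val] at h1
  have hi := i.isLt
  by_cases h2 : i.val + 2 < n
  · rw [Nat.mod_eq_of_lt h2] at h1; omega
  · rw [Nat.mod_eq_sub_mod (by omega)] at h1
    rw [Nat.mod_eq_of_lt (by omega)] at h1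
    omega

lemma nextFin_eq_of_val {i j : Fin n} (h : i.val + 1 = j.val) : nextFin i = j :=
  Fin.ext (by rw [nextFin_val_of_lt (h ▸ j.isLt)]; exact h)

lemma cycle_descent_exists (a : Fin n → Prop) {i0 j : Fin n} (h0 : a i0) (hj : ¬ a j) :
    ∃ i, a i ∧ ¬ a (nextFin i) := by
  by_contra hc
  push_neg at hc
  have hpos : 0 < n := i0.pos
  have key : ∀ m : ℕ, a ⟨(i0.val + m) % n, Nat.mod_lt _ hpos⟩ := by
    intro m
    induction m with
    | zero => simpa [Nat.mod_eq_of_lt i0.isLt] using h0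
    | succ m ih =>
      have hx := hc _ ih
      have : nextFin (⟨(i0.val + m) % n, Nat.mod_lt _ hpos⟩ : Fin n)
          = ⟨(i0.val + (m + 1)) % n, Nat.mod_lt _ hpos⟩ := by
        apply Fin.ext
        simp only [nextFin]
        rw [Nat.mod_add_mod, Nat.add_assoc]
      rwa [this] at hx
  have hkey := key ((n - i0.val) + j.val)
  have heq : (⟨(i0.val + ((n - i0.val) + j.val)) % n, Nat.mod_lt _ hpos⟩ : Fin n) = j := by
    apply Fin.ext
    show (i0.val + ((n - i0.val) + j.val)) % n = j.val
    have h1 : i0.val + ((n - i0.val) + j.val) = j.val + n := by have := i0.isLt; omega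
    rw [h1, Nat.add_mod_right, Nat.mod_eq_of_lt j.isLt]
  rw [heq] at hkey
  exact hj hkey

lemma descent_unique (a : Fin n → Prop)
    (halt4 : ∀ i1 i2 i3 i4 : Fin n, i1.val < i2.val → i2.val < i3.val → i3.val < i4.val →
      ¬(a i1 ∧ ¬a i2 ∧ a i3 ∧ ¬a i4) ∧ ¬(¬a i1 ∧ a i2 ∧ ¬a i3 ∧ a i4))
    {i i' : Fin n} (h : a i ∧ ¬ a (nextFin i)) (h' : a i' ∧ ¬ a (nextFin i')) : i = i' := by
  have main : ∀ i i' : Fin n, a i ∧ ¬ a (nextFin i) → a i' ∧ ¬ a (nextFin i') →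
      i.val < i'.val → False := by
    intro i i' h h' hlt
    have hne1 : nextFin i ≠ i' := by intro he; rw [he] at h; exact h.2 h'.1
    have hne2 : nextFin i' ≠ i := by intro he; rw [he] at h'; exact h'.2 h.1
    have hi'n := i'.isLt
    have hv1 : (nextFin i).val = i.val + 1 := nextFin_val_of_lt (by omega)
    have hlt2 : i.val + 1 < i'.val := by
      rcases Nat.lt_or_ge (i.val + 1) i'.val with hgood | hbad
      · exact hgood
      · exfalso; exact hne1 (Fin.ext (by omega))
    by_cases hw : i'.val + 1 < n
    · have hv2 : (nextFin i').val = i'.val + 1 := nextFin_val_of_lt hw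
      exact (halt4 i (nextFin i) i' (nextFin i') (by omega) (by omega) (by omega)).1
        ⟨h.1, h.2, h'.1, h'.2⟩
    · have hv2 : (nextFin i').val = 0 := nextFin_val_of_eq (by omega)
      have hipos : 0 < i.val := by
        rcases Nat.eq_zero_or_pos i.val with h0 | h0
        · exfalso; exact hne2 (Fin.ext (by omega))
        · exact h0
      exact (halt4 (nextFin i') i (nextFin i) i' (by omega) (by omega) (by omega)).2
        ⟨h'.2, h.1, h.2, h'.1⟩
  rcases Nat.lt_trichotomy i.val i'.val with hlt | heq | hgt
  · exact absurd (main i i' h h' hlt) (by simp)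
  · exact Fin.ext heq
  · exact absurd (main i' i h' h hgt) (by simp)

lemma count_lemma (hn : 3 ≤ n) (t : Fin n → ℝ) (hinj : Function.Injective t)
    (halt : ∀ i1 i2 i3 i4 : Fin n, i1.val < i2.val → i2.val < i3.val → i3.val < i4.val →
      ¬(max (t i2) (t i4) < min (t i1) (t i3)) ∧ ¬(max (t i1) (t i3) < min (t i2) (t i4))) :
    Nat.card {ij : Fin n × Fin n // (t ij.1 - t ij.2) * (t (nextFin ij.1) - t ij.2) < 0}
      = n - 2 := by
  classical
  have htne : ∀ {i k : Fin n}, t i = t k → i = k := fun h => hinj h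
  -- reduce to double sum
  have h1 : Nat.card {ij : Fin n × Fin n // (t ij.1 - t ij.2) * (t (nextFin ij.1) - t ij.2) < 0}
      = ∑ j : Fin n, ∑ i : Fin n, (if (t i - t j) * (t (nextFin i) - t j) < 0 then 1 else 0) := by
    rw [Nat.card_eq_fintype_card, Fintype.card_subtype, Finset.card_filter,
      Fintype.sum_prod_type]
    exact Finset.sum_comm
  -- the per-j identity
  have key : ∀ j : Fin n,
      (∑ i : Fin n, (if (t i - t j) * (t (nextFin i) - t j) < 0 then 1 else 0))
      + (if t j < t (nextFin j) then 1 else 0) + (if t j < t (prevFin j) then 1 else 0)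
      = 2 * (if (∃ i, t j < t i) then 1 else 0) := by
    intro j
    by_cases hA : ∃ i, t j < t i
    · -- positive case
      rw [if_pos hA]
      set a : Fin n → Prop := fun i => t j < t i with ha
      have halt4a : ∀ i1 i2 i3 i4 : Fin n, i1.val < i2.val → i2.val < i3.val → i3.val < i4.val →
          ¬(a i1 ∧ ¬a i2 ∧ a i3 ∧ ¬a i4) ∧ ¬(¬a i1 ∧ a i2 ∧ ¬a i3 ∧ a i4) := by
        intro i1 i2 i3 i4 h12 h23 h34
        obtain ⟨H1, H2⟩ := halt i1 i2 i3 i4 h12 h23 h34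
        constructor
        · rintro ⟨p1, p2, p3, p4⟩
          exact H1 (lt_of_le_of_lt (max_le (not_lt.1 p2) (not_lt.1 p4)) (lt_min p1 p3))
        · rintro ⟨p1, p2, p3, p4⟩
          exact H2 (lt_of_le_of_lt (max_le (not_lt.1 p1) (not_lt.1 p3)) (lt_min p2 p4))
      set a' : Fin n → Prop := fun i => ¬ (t j < t i) with ha'
      have halt4a' : ∀ i1 i2 i3 i4 : Fin n, i1.val < i2.val → i2.val < i3.val → i3.val < i4.val →
          ¬(a' i1 ∧ ¬a' i2 ∧ a' i3 ∧ ¬a' i4) ∧ ¬(¬a' i1 ∧ a' i2 ∧ ¬a' i3 ∧ a' i4) := by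
        intro i1 i2 i3 i4 h12 h23 h34
        obtain ⟨H1, H2⟩ := halt i1 i2 i3 i4 h12 h23 h34
        constructor
        · rintro ⟨p1, p2, p3, p4⟩
          exact H2 (lt_of_le_of_lt (max_le (not_lt.1 p1) (not_lt.1 p3))
            (lt_min (not_not.1 p2) (not_not.1 p4)))
        · rintro ⟨p1, p2, p3, p4⟩
          exact H1 (lt_of_le_of_lt (max_le (not_lt.1 p2) (not_lt.1 p4))
            (lt_min (not_not.1 p1) (not_not.1 p3)))
      obtain ⟨i0, hi0⟩ := hA
      -- split the sum
      have hsplit : ∀ i : Fin n,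
          (if (t i - t j) * (t (nextFin i) - t j) < 0 then (1:ℕ) else 0)
          = (if t j < t i ∧ t (nextFin i) < t j then 1 else 0)
            + (if t i < t j ∧ t j < t (nextFin i) then 1 else 0) := by
        intro i
        by_cases hD : t j < t i ∧ t (nextFin i) < t j
        · rw [if_pos hD, if_pos, if_neg]
          · rintro ⟨u1, u2⟩; exact absurd hD.1 (not_lt.2 u1.le)
          · exact mul_neg_of_pos_of_neg (sub_pos.2 hD.1) (sub_neg.2 hD.2)
        · by_cases hAs : t i < t j ∧ t j < t (nextFin i)
          · rw [if_pos hAs, if_neg hD, if_pos]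
            exact mul_neg_of_neg_of_pos (sub_neg.2 hAs.1) (sub_pos.2 hAs.2)
          · rw [if_neg hD, if_neg hAs, if_neg]
            intro hcon
            rcases mul_neg_iff.1 hcon with ⟨u1, u2⟩ | ⟨u1, u2⟩
            · exact hD ⟨sub_pos.1 u1, sub_neg.1 u2⟩
            · exact hAs ⟨sub_neg.1 u1, sub_pos.1 u2⟩
      rw [Finset.sum_congr rfl (fun i _ => hsplit i), Finset.sum_add_distrib]
      -- DESC part
      have hD : (∑ i : Fin n, (if t j < t i ∧ t (nextFin i) < t j then (1:ℕ) else 0))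
          + (if t j < t (prevFin j) then 1 else 0) = 1 := by
        by_cases hpj : t j < t (prevFin j)
        · rw [if_pos hpj]
          have hz : ∀ i : Fin n, ¬ (t j < t i ∧ t (nextFin i) < t j) := by
            rintro i ⟨d1, d2⟩
            have hi : i = prevFin j := descent_unique a halt4a ⟨d1, not_lt.2 d2.le⟩
              ⟨hpj, by rw [nextFin_prevFin]; exact lt_irrefl _⟩
            rw [hi, nextFin_prevFin] at d2
            exact lt_irrefl _ d2
          rw [Finset.sum_eq_zero (fun i _ => if_neg (hz i))]
        · rw [if_neg hpj]
          obtain ⟨id, hid1, hid2⟩ := cycle_descent_exists a hi0 (lt_irrefl (t j))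
          have hDid : t j < t id ∧ t (nextFin id) < t j := by
            refine ⟨hid1, ?_⟩
            rcases lt_or_eq_of_le (not_lt.1 hid2) with h | h
            · exact h
            · exfalso
              have : nextFin id = j := htne h
              have : id = prevFin j := by rw [← this, prevFin_nextFin]
              rw [this] at hid1
              exact hpj hid1
          rw [Finset.sum_eq_single id (fun b _ hb => if_neg (fun hDb => hb
            (descent_unique a halt4a ⟨hDb.1, not_lt.2 hDb.2.le⟩ ⟨hid1, hid2⟩)))
            (fun hni => absurd (Finset.mem_univ id) hni), if_pos hDid]
      -- ASC part
      have hAs : (∑ i : Fin n, (if t i < t j ∧ t j < t (nextFin i) then (1:ℕ) else 0))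
          + (if t j < t (nextFin j) then 1 else 0) = 1 := by
        by_cases hnj : t j < t (nextFin j)
        · rw [if_pos hnj]
          have hz : ∀ i : Fin n, ¬ (t i < t j ∧ t j < t (nextFin i)) := by
            rintro i ⟨d1, d2⟩
            have hi : i = j := descent_unique a' halt4a' ⟨not_lt.2 d1.le, not_not_intro d2⟩
              ⟨lt_irrefl _, not_not_intro hnj⟩
            rw [hi] at d1
            exact lt_irrefl _ d1
          rw [Finset.sum_eq_zero (fun i _ => if_neg (hz i))]
        · rw [if_neg hnj]
          obtain ⟨ia, hia1, hia2⟩ := cycle_descent_exists a' (not_lt.2 (le_refl (t j)))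
            (not_not_intro hi0)
          have hAia : t ia < t j ∧ t j < t (nextFin ia) := by
            refine ⟨?_, not_not.1 hia2⟩
            rcases lt_or_eq_of_le (not_lt.1 hia1) with h | h
            · exact h
            · exfalso
              have : ia = j := htne h
              rw [this] at hia2
              exact hnj (not_not.1 hia2)
          rw [Finset.sum_eq_single ia (fun b _ hb => if_neg (fun hAb => hb
            (descent_unique a' halt4a' ⟨not_lt.2 hAb.1.le, not_not_intro hAb.2⟩ ⟨hia1, hia2⟩)))
            (fun hni => absurd (Finset.mem_univ ia) hni), if_pos hAia]
      omega
    · -- negative case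
      have hAex : ¬ ∃ i, t j < t i := hA
      push_neg at hA
      have hz : ∀ i : Fin n, ¬ ((t i - t j) * (t (nextFin i) - t j) < 0) := by
        intro i
        have u1 := sub_nonpos.2 (hA i)
        have u2 := sub_nonpos.2 (hA (nextFin i))
        nlinarith
      rw [Finset.sum_eq_zero (fun i _ => if_neg (hz i)), if_neg (not_lt.2 (hA (nextFin j))),
        if_neg (not_lt.2 (hA (prevFin j))), if_neg hAex]
  -- global sums
  obtain ⟨jm, -, hjm⟩ := Finset.exists_max_image Finset.univ t ⟨⟨0, by omega⟩, Finset.mem_univ _⟩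
  have hmaxiff : ∀ j : Fin n, (∃ i, t j < t i) ↔ j ≠ jm := by
    intro j
    constructor
    · rintro ⟨i, hi⟩ rfl
      exact absurd (hjm i (Finset.mem_univ i)) (not_le.2 hi)
    · intro hne
      refine ⟨jm, ?_⟩
      rcases lt_or_eq_of_le (hjm j (Finset.mem_univ j)) with h | h
      · exact h
      · exact absurd (htne h) hne
  have hS1 : (∑ j : Fin n, (if (∃ i, t j < t i) then (1:ℕ) else 0)) = n - 1 := by
    have hjj : ∀ j : Fin n, (if (∃ i, t j < t i) then (1:ℕ) else 0) = if j ≠ jm then 1 else 0 := by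
      intro j
      by_cases h : j ≠ jm
      · rw [if_pos ((hmaxiff j).2 h), if_pos h]
      · rw [if_neg (fun hc => h ((hmaxiff j).1 hc)), if_neg h]
    rw [Finset.sum_congr rfl (fun j _ => hjj j), ← Finset.sum_filter,
      Finset.filter_ne', Finset.sum_const, Finset.card_erase_of_mem (Finset.mem_univ jm),
      Finset.card_univ, Fintype.card_fin, smul_eq_mul, mul_one]
  have hS23 : (∑ j : Fin n, (if t j < t (nextFin j) then (1:ℕ) else 0))
      + (∑ j : Fin n, (if t j < t (prevFin j) then (1:ℕ) else 0)) = n := by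
    have hre : (∑ j : Fin n, (if t j < t (prevFin j) then (1:ℕ) else 0))
        = ∑ k : Fin n, (if t (nextFin k) < t k then (1:ℕ) else 0) := by
      refine (Fintype.sum_bijective nextFin nextFin_bijective _ _ (fun k => ?_)).symm
      rw [prevFin_nextFin]
    rw [hre, ← Finset.sum_add_distrib]
    have : ∀ k : Fin n, (if t k < t (nextFin k) then (1:ℕ) else 0)
        + (if t (nextFin k) < t k then (1:ℕ) else 0) = 1 := by
      intro k
      have hne : t k ≠ t (nextFin k) := fun h => nextFin_ne (by omega) k (htne h.symm)
      rcases lt_or_gt_of_ne hne with h | h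
      · rw [if_pos h, if_neg (not_lt.2 h.le)]
      · rw [if_neg (not_lt.2 h.le), if_pos h]
    rw [Finset.sum_congr rfl (fun k _ => this k)]
    simp
  have hsum : (∑ j : Fin n, ∑ i : Fin n,
        (if (t i - t j) * (t (nextFin i) - t j) < 0 then (1:ℕ) else 0))
      + ((∑ j : Fin n, (if t j < t (nextFin j) then (1:ℕ) else 0))
      + (∑ j : Fin n, (if t j < t (prevFin j) then (1:ℕ) else 0)))
      = 2 * (n - 1) := by
    have hterm : ∀ j ∈ Finset.univ,
        ((∑ i : Fin n, if (t i - t j) * (t (nextFin i) - t j) < 0 then (1:ℕ) else 0)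
          + ((if t j < t (nextFin j) then 1 else 0) + (if t j < t (prevFin j) then 1 else 0)))
        = 2 * (if (∃ i, t j < t i) then (1:ℕ) else 0) := fun j _ => by have := key j; omega
    rw [← Finset.sum_add_distrib, ← Finset.sum_add_distrib,
      Finset.sum_congr rfl hterm, ← Finset.mul_sum, hS1]
  rw [h1]
  omega
end

set_option maxHeartbeats 1000000 in
theorem crossings_point_outside_convex_cycle (n : ℕ) (hn : 3 ≤ n)
    (q : Fin n → ℝ × ℝ) (p : ℝ × ℝ)
    (hq_inj : Function.Injective q)
    (hcyc : ∀ i : Fin n, ∃ φ : (ℝ × ℝ) →ᵃ[ℝ] ℝ,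
      φ (q i) = 0 ∧ φ (q (nextFin i)) = 0 ∧
      ∀ j : Fin n, j ≠ i → j ≠ nextFin i → 0 < φ (q j))
    (hp : p ∉ convexHull ℝ (Set.range q))
    (hgen : ∀ a b c : ℝ × ℝ, a ∈ insert p (Set.range q) → b ∈ insert p (Set.range q) →
      c ∈ insert p (Set.range q) → a ≠ b → a ≠ c → b ≠ c →
      ¬ Collinear ℝ ({a, b, c} : Set (ℝ × ℝ))) :
    Nat.card {ij : Fin n × Fin n //
      ∃ pt ∈ openSegment ℝ (q ij.1) (q (nextFin ij.1)),
        Collinear ℝ ({p, q ij.2, pt} : Set (ℝ × ℝ))} = n - 2 := by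
  classical
  have npos : 0 < n := by omega
  have hnn : ∀ i : Fin n, nextFin i ≠ i := nextFin_ne (by omega)
  have hpq : ∀ i : Fin n, p ≠ q i := by
    intro i he
    exact hp (he ▸ subset_convexHull ℝ _ (Set.mem_range_self i))
  have hqmem : ∀ i : Fin n, q i ∈ insert p (Set.range q) :=
    fun i => Set.mem_insert_of_mem _ ⟨i, rfl⟩
  have hpmem : p ∈ insert p (Set.range q) := Set.mem_insert _ _
  have hqne : ∀ {i j : Fin n}, i ≠ j → q i ≠ q j := fun h he => h (hq_inj he)
  have hpt : ∀ i j : Fin n, i ≠ j → det2 (q i - p) (q j - p) ≠ 0 := by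
    intro i j hij h0
    exact hgen p (q i) (q j) hpmem (hqmem i) (hqmem j) (hpq i) (hpq j)
      (hqne hij) ((collinear_iff_det (hpq i)).2 h0)
  have htri : ∀ i j k : Fin n, i ≠ j → i ≠ k → j ≠ k →
      det2 (q j - q i) (q k - q i) ≠ 0 := by
    intro i j k hij hik hjk h0
    exact hgen (q i) (q j) (q k) (hqmem i) (hqmem j) (hqmem k)
      (hqne hij) (hqne hik) (hqne hjk) ((collinear_iff_det (hqne hij)).2 h0)
  -- separating functional
  obtain ⟨f, u, hfu, hfq⟩ := geometric_hahn_banach_point_closed (convex_convexHull ℝ _)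
    ((Set.finite_range q).isCompact_convexHull ℝ |>.isClosed) hp
  set f1 : ℝ := f (1, 0) with hf1
  set f2 : ℝ := f (0, 1) with hf2
  have hfrepr : ∀ w : ℝ × ℝ, f w = f1 * w.1 + f2 * w.2 := by
    intro w
    have hw : w = w.1 • ((1:ℝ), (0:ℝ)) + w.2 • ((0:ℝ), (1:ℝ)) := by
      apply Prod.ext <;> simp
    conv_lhs => rw [hw]
    rw [map_add, map_smul, map_smul, smul_eq_mul, smul_eq_mul]
    ring
  set F : Fin n → ℝ := fun i => f1 * (q i - p).1 + f2 * (q i - p).2 with hF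
  have hFpos : ∀ i, 0 < F i := by
    intro i
    have h1 : u < f (q i) := hfq _ (subset_convexHull ℝ _ (Set.mem_range_self i))
    have h2 : F i = f (q i) - f p := by
      rw [← map_sub, hfrepr]
    rw [h2]
    linarith
  have hc : (0:ℝ) < f1^2 + f2^2 := by
    rcases eq_or_ne f1 0 with h1 | h1
    · rcases eq_or_ne f2 0 with h2 | h2
      · exfalso
        have := hFpos ⟨0, npos⟩
        rw [hF] at this
        simp only [h1, h2] at this
        norm_num at this
      · positivity
    · positivity
  set G : Fin n → ℝ := fun i => -f2 * (q i - p).1 + f1 * (q i - p).2 with hG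
  set t : Fin n → ℝ := fun i => G i / F i with ht
  have tsub : ∀ i j : Fin n,
      t i - t j = ((f1^2 + f2^2) / (F i * F j)) * det2 (q j - p) (q i - p) := by
    intro i j
    have hFi := (hFpos i).ne'
    have hFj := (hFpos j).ne'
    rw [ht]
    simp only
    rw [div_sub_div _ _ hFi hFj]
    rw [show G i * F j - F i * G j = (f1^2 + f2^2) * det2 (q j - p) (q i - p) from by
      simp only [hG, hF, det2]; ring]
    ring
  have hsign : ∀ i j : Fin n, t j < t i ↔ 0 < det2 (q j - p) (q i - p) := by
    intro i j
    rw [← sub_pos, tsub i j]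
    have hk : 0 < (f1^2 + f2^2) / (F i * F j) := div_pos hc (mul_pos (hFpos i) (hFpos j))
    constructor
    · intro h
      by_contra hle
      push_neg at hle
      nlinarith
    · intro h
      exact mul_pos hk h
  have htinj : Function.Injective t := by
    intro i j he
    by_contra hne
    have h0 : ((f1^2 + f2^2) / (F i * F j)) * det2 (q j - p) (q i - p) = 0 := by
      rw [← tsub, he, sub_self]
    have hk : 0 < (f1^2 + f2^2) / (F i * F j) := div_pos hc (mul_pos (hFpos i) (hFpos j))
    rcases mul_eq_zero.1 h0 with h | h
    · exact hk.ne' h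
    · exact hpt j i (Ne.symm hne) h
  -- orientation machinery
  set o : Fin n → ℝ := fun i => ori (q i) (q (nextFin i)) (q (nextFin (nextFin i))) with ho
  have hedge' : ∀ i m : Fin n, m ≠ i → m ≠ nextFin i →
      0 < ori (q i) (q (nextFin i)) (q m) * o i := by
    intro i m hm1 hm2
    obtain ⟨φ, h1, h2, h3⟩ := hcyc i
    obtain ⟨k, hk⟩ := affine_factor φ (hqne (Ne.symm (hnn i))) h1 h2
    have hm0 := h3 m hm1 hm2
    have hmm := h3 (nextFin (nextFin i)) (nextFin_nextFin_ne hn i) (hnn (nextFin i))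
    rw [hk (q m)] at hm0
    rw [hk (q (nextFin (nextFin i)))] at hmm
    have hprod := mul_pos hm0 hmm
    show 0 < ori (q i) (q (nextFin i)) (q m) * ori (q i) (q (nextFin i)) (q (nextFin (nextFin i)))
    by_contra hcon
    push_neg at hcon
    nlinarith [hprod, mul_nonpos_of_nonneg_of_nonpos (sq_nonneg k) hcon]
  have ho_ne : ∀ i : Fin n, o i ≠ 0 := by
    intro i h0
    have h := hedge' i (nextFin (nextFin i)) (nextFin_nextFin_ne hn i) (hnn (nextFin i))
    rw [h0, mul_zero] at h
    exact lt_irrefl _ h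
  have hchain : ∀ i : Fin n, 0 < o i * o (nextFin i) := by
    intro i
    have h := hedge' (nextFin i) i (Ne.symm (hnn i)) (Ne.symm (nextFin_nextFin_ne hn i))
    have he : ori (q (nextFin i)) (q (nextFin (nextFin i))) (q i)
        = ori (q i) (q (nextFin i)) (q (nextFin (nextFin i))) := (ori_cycle _ _ _).symm
    rw [he] at h
    exact h
  set ω : ℝ := o ⟨0, npos⟩ with hω
  have hωpos : ∀ i : Fin n, 0 < o i * ω := by
    have haux : ∀ m (hm : m < n), 0 < o ⟨m, hm⟩ * ω := by
      intro m
      induction m with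
      | zero => intro hm; exact mul_self_pos.2 (ho_ne ⟨0, npos⟩)
      | succ m ih =>
        intro hm
        have hmn : m < n := by omega
        have hnext : nextFin (⟨m, hmn⟩ : Fin n) = ⟨m + 1, hm⟩ := nextFin_eq_of_val rfl
        have h1 := hchain ⟨m, hmn⟩
        rw [hnext] at h1
        rw [mul_comm] at h1
        exact pos_mul_trans h1 (ih hmn)
    intro i
    have := haux i.val i.isLt
    simpa using this
  have hω0 : ω ≠ 0 := ho_ne _
  have hEdgeω : ∀ i m : Fin n, m ≠ i → m ≠ nextFin i →
      0 < ori (q i) (q (nextFin i)) (q m) * ω :=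
    fun i m h1 h2 => pos_mul_trans (hedge' i m h1 h2) (hωpos i)
  -- full orientation
  have horia : ∀ a b c : Fin n, a.val < b.val → b.val < c.val →
      0 < ori (q a) (q b) (q c) * ω := by
    suffices H : ∀ k, ∀ a b c : Fin n, a.val < b.val → b.val < c.val → c.val - b.val = k →
        0 < ori (q a) (q b) (q c) * ω by
      intro a b c h1 h2; exact H _ a b c h1 h2 rfl
    intro k
    induction k using Nat.strong_induction_on with
    | _ k IH =>
      intro a b c hab hbc hk
      by_cases h1 : b.val = a.val + 1
      · have hA : nextFin a = b := nextFin_eq_of_val h1.symm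
        have := hEdgeω a c (Fin.ne_of_val_ne (by omega))
          (by rw [hA]; exact Fin.ne_of_val_ne (by omega))
        rwa [hA] at this
      · by_cases h2 : c.val = b.val + 1
        · have hB : nextFin b = c := nextFin_eq_of_val h2.symm
          have := hEdgeω b a (Fin.ne_of_val_ne (by omega))
            (by rw [hB]; exact Fin.ne_of_val_ne (by omega))
          rw [hB] at this
          rw [show ori (q a) (q b) (q c) = ori (q b) (q c) (q a) from ori_cycle _ _ _]
          exact this
        · have hcn := c.isLt
          have hmlt : b.val + 1 < n := by omega
          have hf1 : 0 < ori (q a) (q b) (q ⟨b.val + 1, hmlt⟩) * ω :=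
            IH 1 (by omega) a b ⟨b.val + 1, hmlt⟩ hab (by simp) (by simp)
          have hf2 : 0 < ori (q a) (q ⟨b.val + 1, hmlt⟩) (q c) * ω :=
            IH (k - 1) (by omega) a ⟨b.val + 1, hmlt⟩ c (by simp; omega) (by simp; omega)
              (by simp; omega)
          have han : a.val + 1 < n := by omega
          have hA : nextFin a = ⟨a.val + 1, han⟩ := nextFin_eq_of_val rfl
          have hg1 : 0 < ori (q a) (q (nextFin a)) (q b) * ω :=
            hEdgeω a b (Fin.ne_of_val_ne (by omega))
              (by rw [hA]; exact Fin.ne_of_val_ne (by simp; omega))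
          have hg2 : 0 < ori (q a) (q (nextFin a)) (q ⟨b.val + 1, hmlt⟩) * ω :=
            hEdgeω a ⟨b.val + 1, hmlt⟩ (Fin.ne_of_val_ne (by simp; omega))
              (by rw [hA]; exact Fin.ne_of_val_ne (by simp; omega))
          have hg3 : 0 < ori (q a) (q (nextFin a)) (q c) * ω :=
            hEdgeω a c (Fin.ne_of_val_ne (by omega))
              (by rw [hA]; exact Fin.ne_of_val_ne (by simp; omega))
          have hplk := plucker (q (nextFin a) - q a) (q b - q a)
            (q ⟨b.val + 1, hmlt⟩ - q a) (q c - q a)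
          have key : (ori (q a) (q (nextFin a)) (q ⟨b.val + 1, hmlt⟩) * ω)
                * (ori (q a) (q b) (q c) * ω)
              = (ori (q a) (q (nextFin a)) (q b) * ω)
                  * (ori (q a) (q ⟨b.val + 1, hmlt⟩) (q c) * ω)
                + (ori (q a) (q (nextFin a)) (q c) * ω)
                  * (ori (q a) (q b) (q ⟨b.val + 1, hmlt⟩) * ω) := by
            simp only [ori]
            linear_combination (ω^2) * hplk
          by_contra hcon
          push_neg at hcon
          nlinarith [key, hg2, mul_pos hg1 hf2, mul_pos hg3 hf1,
            mul_nonpos_of_nonneg_of_nonpos hg2.le hcon]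
  -- the alternation-exclusion property of t
  have halt : ∀ i1 i2 i3 i4 : Fin n, i1.val < i2.val → i2.val < i3.val → i3.val < i4.val →
      ¬(max (t i2) (t i4) < min (t i1) (t i3)) ∧ ¬(max (t i1) (t i3) < min (t i2) (t i4)) := by
    intro i1 i2 i3 i4 h12 h23 h34
    have oABC := horia i1 i2 i3 h12 h23
    have oABD := horia i1 i2 i4 h12 (by omega)
    have oACD := horia i1 i3 i4 (by omega) h34
    have oBCD := horia i2 i3 i4 h23 h34
    set A := q i1 with hA
    set B := q i2 with hB
    set C := q i3 with hC
    set D := q i4 with hD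
    set N : ℝ := ori A C D + ori A B C with hN
    have hNω : 0 < N * ω := by rw [hN, add_mul]; exact add_pos oACD oABC
    have hNne : N ≠ 0 := fun h => by rw [h, zero_mul] at hNω; exact lt_irrefl _ hNω
    set s : ℝ := ori A B D / N with hs
    set r : ℝ := ori A B C / N with hr
    have hsω : s = (ori A B D * ω) / (N * ω) := by
      rw [hs, mul_div_mul_right _ _ hω0]
    have hrω : r = (ori A B C * ω) / (N * ω) := by
      rw [hr, mul_div_mul_right _ _ hω0]
    have hs0 : 0 < s := by rw [hsω]; exact div_pos oABD hNω
    have hs1 : s < 1 := by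
      rw [hsω, div_lt_one hNω]
      have hdiff : N * ω - ori A B D * ω = ori B C D * ω := by
        rw [hN]
        linear_combination (-ω) * (four_pt A B C D)
      linarith [oBCD]
    have hr0 : 0 < r := by rw [hrω]; exact div_pos oABC hNω
    have hr1 : r < 1 := by
      rw [hrω, div_lt_one hNω]
      have hdiff : N * ω - ori A B C * ω = ori A C D * ω := by rw [hN]; ring
      linarith [oACD]
    have hz2 : (1 - s) • A + s • C = (1 - r) • B + r • D := by
      have hkey := cross_point_identity A B C D
      rw [← hN] at hkey
      have h1 : (1 - s) = (N - ori A B D) / N := by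
        rw [hs]; field_simp
      have h2 : (1 - r) = (N - ori A B C) / N := by
        rw [hr]; field_simp
      have expand : ∀ (x y : ℝ × ℝ) (a b : ℝ),
          (a / N) • x + (b / N) • y = N⁻¹ • (a • x + b • y) := by
        intro x y a b
        rw [smul_add, div_eq_inv_mul, div_eq_inv_mul, mul_smul, mul_smul]
      rw [h1, h2, hs, hr, expand, expand, hkey]
    have main : ∀ θ : ℝ,
        ((θ < t i1 ∧ θ < t i3 ∧ t i2 ≤ θ ∧ t i4 ≤ θ) ∨
         (θ < t i2 ∧ θ < t i4 ∧ t i1 ≤ θ ∧ t i3 ≤ θ)) → False := by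
      intro θ hcase
      set L : ℝ × ℝ → ℝ := fun w =>
        (-f2 * (w - p).1 + f1 * (w - p).2) - θ * (f1 * (w - p).1 + f2 * (w - p).2) with hL
      have hLq : ∀ i : Fin n, L (q i) = G i - θ * F i := fun i => rfl
      have hLt : ∀ i : Fin n, θ < t i ↔ 0 < L (q i) := by
        intro i
        rw [hLq i, ht]
        simp only
        rw [lt_div_iff₀ (hFpos i)]
        constructor <;> intro h <;> nlinarith
      have hLle : ∀ i : Fin n, t i ≤ θ ↔ L (q i) ≤ 0 := by
        intro i
        constructor <;> intro h
        · by_contra hcon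
          push_neg at hcon
          exact absurd ((hLt i).2 hcon) (not_lt.2 h)
        · by_contra hcon
          push_neg at hcon
          exact absurd ((hLt i).1 hcon) (not_lt.2 h)
      have hLlin : ∀ (x y : ℝ × ℝ) (sc : ℝ),
          L ((1 - sc) • x + sc • y) = (1 - sc) * L x + sc * L y := by
        intro x y sc
        simp only [hL, Prod.fst_add, Prod.snd_add, Prod.smul_fst, Prod.smul_snd, smul_eq_mul,
          Prod.fst_sub, Prod.snd_sub]
        ring
      rcases hcase with ⟨u1, u3, u2, u4⟩ | ⟨u2, u4, u1, u3⟩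
      · have l1 := (hLt i1).1 u1
        have l3 := (hLt i3).1 u3
        have l2 := (hLle i2).1 u2
        have l4 := (hLle i4).1 u4
        have e1 : 0 < L ((1 - s) • A + s • C) := by
          rw [hLlin]
          nlinarith
        have e2 : L ((1 - s) • A + s • C) ≤ 0 := by
          rw [hz2, hLlin]
          nlinarith
        linarith
      · have l2 := (hLt i2).1 u2
        have l4 := (hLt i4).1 u4
        have l1 := (hLle i1).1 u1
        have l3 := (hLle i3).1 u3
        have e1 : 0 < L ((1 - r) • B + r • D) := by
          rw [hLlin]
          nlinarith
        have e2 : L ((1 - r) • B + r • D) ≤ 0 := by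
          rw [← hz2, hLlin]
          nlinarith
        linarith
    constructor
    · intro hlt
      exact main (max (t i2) (t i4)) (Or.inl ⟨lt_of_lt_of_le hlt (min_le_left _ _),
        lt_of_lt_of_le hlt (min_le_right _ _), le_max_left _ _, le_max_right _ _⟩)
    · intro hlt
      exact main (max (t i1) (t i3)) (Or.inr ⟨lt_of_lt_of_le hlt (min_le_left _ _),
        lt_of_lt_of_le hlt (min_le_right _ _), le_max_left _ _, le_max_right _ _⟩)
  -- predicate equivalence
  have hiff : ∀ ij : Fin n × Fin n,
      (∃ pt ∈ openSegment ℝ (q ij.1) (q (nextFin ij.1)),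
        Collinear ℝ ({p, q ij.2, pt} : Set (ℝ × ℝ)))
      ↔ (t ij.1 - t ij.2) * (t (nextFin ij.1) - t ij.2) < 0 := by
    rintro ⟨i, j⟩
    simp only
    set i' := nextFin i with hi'
    set d1 := det2 (q j - p) (q i - p) with hd1
    set d2 := det2 (q j - p) (q i' - p) with hd2
    have hnot : ¬ (d1 = 0 ∧ d2 = 0) := by
      rintro ⟨e1, e2⟩
      have h1 : j = i := by
        by_contra hne; exact hpt j i hne e1
      have h2 : j = i' := by
        by_contra hne; exact hpt j i' hne e2
      exact hnn i (by rw [← hi', ← h2, h1])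
    have hcomb : ∀ a b : ℝ, a + b = 1 →
        det2 (q j - p) ((a • q i + b • q i') - p) = a * d1 + b * d2 := by
      intro a b hab
      rw [hd1, hd2]
      simp only [det2, Prod.fst_sub, Prod.snd_sub, Prod.fst_add, Prod.snd_add,
        Prod.smul_fst, Prod.smul_snd, smul_eq_mul]
      linear_combination (((q j).1 - p.1) * p.2 - ((q j).2 - p.2) * p.1) * hab
    have hstep1 : (∃ pt ∈ openSegment ℝ (q i) (q i'),
        Collinear ℝ ({p, q j, pt} : Set (ℝ × ℝ)))
        ↔ (∃ a b : ℝ, 0 < a ∧ 0 < b ∧ a + b = 1 ∧ a * d1 + b * d2 = 0) := by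
      constructor
      · rintro ⟨pt, hmem, hcol⟩
        rw [openSegment] at hmem
        obtain ⟨a, b, ha, hb, hab, heq⟩ := hmem
        refine ⟨a, b, ha, hb, hab, ?_⟩
        rw [← hcomb a b hab]
        rw [heq]
        exact (collinear_iff_det (hpq j)).1 hcol
      · rintro ⟨a, b, ha, hb, hab, hz⟩
        refine ⟨a • q i + b • q i', ?_, ?_⟩
        · rw [openSegment]
          exact ⟨a, b, ha, hb, hab, rfl⟩
        · exact (collinear_iff_det (hpq j)).2 (by rw [hcomb a b hab]; exact hz)
    rw [hstep1, exists_convex_zero_iff hnot]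
    -- now d1 * d2 < 0 ↔ (t i - t j) * (t i' - t j) < 0
    rw [tsub i j, tsub i' j]
    have hk1 : 0 < (f1 ^ 2 + f2 ^ 2) / (F i * F j) := div_pos hc (mul_pos (hFpos i) (hFpos j))
    have hk2 : 0 < (f1 ^ 2 + f2 ^ 2) / (F i' * F j) := div_pos hc (mul_pos (hFpos i') (hFpos j))
    rw [← hd1, ← hd2]
    constructor
    · intro h
      by_contra hcon
      push_neg at hcon
      nlinarith [mul_neg_of_pos_of_neg (mul_pos hk1 hk2) h]
    · intro h
      by_contra hcon
      push_neg at hcon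
      nlinarith [mul_neg_of_pos_of_neg (mul_pos hk1 hk2) h]
  rw [← count_lemma hn t htinj halt]
  exact Nat.card_congr (Equiv.subtypeEquivRight hiff)
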